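/- Fixed-dictionary reconstruction error lower bound: Let C* ∈ ℝ^{d×k} and C_W ∈ ℝ^{d×m} with k ≤ d < m, and suppose min over P ∈ ℝ^{m×k} of ‖C_W P − C*‖_F ≥ δ for some δ > 0. If A ∈ ℝ^{n×d} satisfies A = Z* (C*)ᵀ with σ_k(Z*) > 0, then min over Z ∈ ℝ^{n×m} of ‖A − Z C_Wᵀ‖_F ≥ σ_k(Z*) · δ. -/

import Mathlib

open Matrix

/-- Frobenius norm of a real matrix. -/
noncomputable def frob {m n : Type*} [Fintype m] [Fintype n] (A : Matrix m n ℝ) : ℝ :=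
  Real.sqrt (∑ i, ∑ j, A i j ^ 2)

/-- The `k`-th largest (i.e. smallest) singular value of `Z ∈ ℝ^{n×k}`:
`σ_k(Z) = sqrt(λ_k(ZᵀZ)) = inf {‖Zu‖ : ‖u‖ = 1}`. -/
noncomputable def sigmaMinCol {n k : Type*} [Fintype n] [Fintype k] (Z : Matrix n k ℝ) : ℝ :=
  sInf {r | ∃ u : k → ℝ, (∑ j, u j ^ 2) = 1 ∧ r = Real.sqrt (∑ i, (Z.mulVec u) i ^ 2)}

noncomputable def frob2 {m n : Type*} [Fintype m] [Fintype n] (A : Matrix m n ℝ) : ℝ :=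
  ∑ i, ∑ j, A i j ^ 2

lemma frob2_nonneg {m n : Type*} [Fintype m] [Fintype n] (A : Matrix m n ℝ) :
    0 ≤ frob2 A := by
  apply Finset.sum_nonneg; intro i _; apply Finset.sum_nonneg; intro j _; positivity

lemma frob_eq {m n : Type*} [Fintype m] [Fintype n] (A : Matrix m n ℝ) :
    frob A = Real.sqrt (frob2 A) := rfl

lemma frob2_transpose {m n : Type*} [Fintype m] [Fintype n] (A : Matrix m n ℝ) :
    frob2 Aᵀ = frob2 A := by
  unfold frob2; rw [Finset.sum_comm]; simp [Matrix.transpose_apply]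

lemma sigma_nonneg {n k : Type*} [Fintype n] [Fintype k] (Z : Matrix n k ℝ) :
    0 ≤ sigmaMinCol Z := by
  apply Real.sInf_nonneg
  rintro r ⟨u, -, rfl⟩
  exact Real.sqrt_nonneg _

lemma sigma_le {n k : Type*} [Fintype n] [Fintype k] (Z : Matrix n k ℝ)
    (u : k → ℝ) (hu : (∑ j, u j ^ 2) = 1) :
    sigmaMinCol Z ≤ Real.sqrt (∑ i, (Z.mulVec u) i ^ 2) := by
  apply csInf_le
  · exact ⟨0, by rintro r ⟨v, -, rfl⟩; exact Real.sqrt_nonneg _⟩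
  · exact ⟨u, hu, rfl⟩

lemma sigma_mulVec {n k : Type*} [Fintype n] [Fintype k] (Z : Matrix n k ℝ)
    (u : k → ℝ) :
    sigmaMinCol Z * Real.sqrt (∑ j, u j ^ 2) ≤ Real.sqrt (∑ i, (Z.mulVec u) i ^ 2) := by
  by_cases h : (∑ j, u j ^ 2) = 0
  · have hu : u = 0 := by
      funext j
      have := (Finset.sum_eq_zero_iff_of_nonneg (fun j _ => by positivity)).mp h j (Finset.mem_univ j)
      exact pow_eq_zero_iff (n := 2) (by norm_num) |>.mp this
    simp [h, hu]
  · have hpos : 0 < ∑ j, u j ^ 2 := lt_of_le_of_ne (Finset.sum_nonneg fun j _ => by positivity) (Ne.symm h)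
    set c : ℝ := Real.sqrt (∑ j, u j ^ 2) with hc
    have hcpos : 0 < c := Real.sqrt_pos.mpr hpos
    have hc2 : c ^ 2 = ∑ j, u j ^ 2 := Real.sq_sqrt hpos.le
    have hunit : (∑ j, (c⁻¹ • u) j ^ 2) = 1 := by
      simp only [Pi.smul_apply, smul_eq_mul, mul_pow, ← Finset.mul_sum]
      rw [← hc2]; field_simp
    have key := sigma_le Z (c⁻¹ • u) hunit
    have hmv : Z.mulVec (c⁻¹ • u) = c⁻¹ • Z.mulVec u := by
      rw [Matrix.mulVec_smul]
    rw [hmv] at key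
    have : Real.sqrt (∑ i, (c⁻¹ • Z.mulVec u) i ^ 2)
        = c⁻¹ * Real.sqrt (∑ i, (Z.mulVec u) i ^ 2) := by
      simp only [Pi.smul_apply, smul_eq_mul, mul_pow, ← Finset.mul_sum]
      rw [Real.sqrt_mul (by positivity), Real.sqrt_sq (by positivity)]
    rw [this] at key
    calc sigmaMinCol Z * c ≤ (c⁻¹ * Real.sqrt (∑ i, (Z.mulVec u) i ^ 2)) * c := by
          exact mul_le_mul_of_nonneg_right key hcpos.le
      _ = Real.sqrt (∑ i, (Z.mulVec u) i ^ 2) := by field_simp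

lemma sigma_sq_mulVec {n k : Type*} [Fintype n] [Fintype k] (Z : Matrix n k ℝ)
    (u : k → ℝ) :
    sigmaMinCol Z ^ 2 * (∑ j, u j ^ 2) ≤ ∑ i, (Z.mulVec u) i ^ 2 := by
  have h := sigma_mulVec Z u
  have h1 : 0 ≤ sigmaMinCol Z * Real.sqrt (∑ j, u j ^ 2) :=
    mul_nonneg (sigma_nonneg Z) (Real.sqrt_nonneg _)
  have := mul_self_le_mul_self h1 h
  have hs : (0:ℝ) ≤ ∑ j, u j ^ 2 := Finset.sum_nonneg fun j _ => by positivity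
  calc sigmaMinCol Z ^ 2 * (∑ j, u j ^ 2)
      = (sigmaMinCol Z * Real.sqrt (∑ j, u j ^ 2)) * (sigmaMinCol Z * Real.sqrt (∑ j, u j ^ 2)) := by
        rw [mul_mul_mul_comm, Real.mul_self_sqrt hs]; ring
    _ ≤ Real.sqrt (∑ i, (Z.mulVec u) i ^ 2) * Real.sqrt (∑ i, (Z.mulVec u) i ^ 2) := this
    _ = ∑ i, (Z.mulVec u) i ^ 2 :=
        Real.mul_self_sqrt (Finset.sum_nonneg fun i _ => by positivity)

lemma frob2_mul_ge {n k l : Type*} [Fintype n] [Fintype k] [Fintype l]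
    (Z : Matrix n k ℝ) (M : Matrix k l ℝ) :
    sigmaMinCol Z ^ 2 * frob2 M ≤ frob2 (Z * M) := by
  unfold frob2
  rw [Finset.sum_comm (s := Finset.univ) (t := Finset.univ) (f := fun (i : k) (j : l) => M i j ^ 2),
    Finset.sum_comm (s := Finset.univ) (t := Finset.univ) (f := fun (i : n) (j : l) => (Z * M) i j ^ 2),
    Finset.mul_sum]
  apply Finset.sum_le_sum
  intro j _
  have h := sigma_sq_mulVec Z (fun l' => M l' j)
  have heq : ∀ i, (Z * M) i j = (Z.mulVec fun l' => M l' j) i := fun i => by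
    simp [Matrix.mul_apply, Matrix.mulVec, dotProduct]
  simp only [heq]
  exact h

lemma sum_mul_eq_trace {a b : Type*} [Fintype a] [Fintype b]
    (M N : Matrix a b ℝ) :
    ∑ i, ∑ j, M i j * N i j = Matrix.trace (Mᵀ * N) := by
  rw [Finset.sum_comm]
  simp [Matrix.trace, Matrix.mul_apply, Matrix.diag]

lemma frob2_sub_of_orth {a b : Type*} [Fintype a] [Fintype b]
    (P Q : Matrix a b ℝ) (h : ∑ i, ∑ j, P i j * Q i j = 0) :
    frob2 (P - Q) = frob2 P + frob2 Q := by
  unfold frob2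
  have expand : ∀ i j, (P - Q) i j ^ 2
      = P i j ^ 2 - 2 * (P i j * Q i j) + Q i j ^ 2 := by
    intro i j; simp [Matrix.sub_apply]; ring
  simp only [expand, Finset.sum_add_distrib, Finset.sum_sub_distrib, ← Finset.mul_sum]
  rw [h]
  ring

/-- Fixed-dictionary reconstruction error lower bound: if every `P` leaves a misalignment
`‖C_W P − C*‖_F ≥ δ` and `A = Z* (C*)ᵀ` with `σ_k(Z*) > 0`, then every `Z` satisfies
`‖A − Z C_Wᵀ‖_F ≥ σ_k(Z*) · δ`. -/
theorem fixed_dictionary_reconstruction_lower_bound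
    (n d k m : ℕ) (hkd : k ≤ d) (hdm : d < m)
    (Cstar : Matrix (Fin d) (Fin k) ℝ) (CW : Matrix (Fin d) (Fin m) ℝ)
    (δ : ℝ) (hδ : 0 < δ)
    (hmis : ∀ P : Matrix (Fin m) (Fin k) ℝ, δ ≤ frob (CW * P - Cstar))
    (Zstar : Matrix (Fin n) (Fin k) ℝ) (A : Matrix (Fin n) (Fin d) ℝ)
    (hA : A = Zstar * Cstarᵀ) (hσ : 0 < sigmaMinCol Zstar) :
    ∀ Z : Matrix (Fin n) (Fin m) ℝ, sigmaMinCol Zstar * δ ≤ frob (A - Z * CWᵀ) := by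
  intro Z
  set σ := sigmaMinCol Zstar with hσdef
  set S : Matrix (Fin k) (Fin k) ℝ := Zstarᵀ * Zstar with hS
  -- S is invertible
  have hdet : IsUnit S.det := by
    rw [← Matrix.isUnit_iff_isUnit_det, ← Matrix.mulVec_injective_iff_isUnit]
    intro u v huv
    have hw : S.mulVec (u - v) = 0 := by
      rw [Matrix.mulVec_sub, huv, sub_self]
    set w := u - v with hwdef
    have hquad : ∑ i, (Zstar.mulVec w) i ^ 2 = 0 := by
      have h1 : w ⬝ᵥ S.mulVec w = 0 := by rw [hw]; simp
      have h2 : w ⬝ᵥ S.mulVec w = (Zstar.mulVec w) ⬝ᵥ (Zstar.mulVec w) := by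
        rw [hS, ← Matrix.mulVec_mulVec, Matrix.dotProduct_mulVec, Matrix.vecMul_transpose]
      rw [h2] at h1
      rw [← h1]
      simp [dotProduct, sq]
    have hle := sigma_sq_mulVec Zstar w
    rw [hquad, ← hσdef] at hle
    have hw0 : ∑ j, w j ^ 2 ≤ 0 := by
      have hp : (0:ℝ) < σ ^ 2 := pow_pos hσ 2
      have h' : σ ^ 2 * (∑ j, w j ^ 2) ≤ σ ^ 2 * 0 := by simpa using hle
      exact (mul_le_mul_iff_right₀ hp).mp h' 
    have : ∀ j, w j = 0 := by
      intro j
      have := (Finset.sum_eq_zero_iff_of_nonneg (fun j _ => by positivity)).mp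
        (le_antisymm hw0 (Finset.sum_nonneg fun j _ => by positivity)) j (Finset.mem_univ j)
      exact pow_eq_zero_iff (n := 2) (by norm_num) |>.mp this
    have : w = 0 := funext this
    exact sub_eq_zero.mp (by rw [← hwdef, this])
  have hSinv : S * S⁻¹ = 1 := Matrix.mul_nonsing_inv S hdet
  set Pt : Matrix (Fin k) (Fin m) ℝ := S⁻¹ * (Zstarᵀ * Z) with hPt
  set X : Matrix (Fin k) (Fin d) ℝ := Cstarᵀ - Pt * CWᵀ with hX
  set R : Matrix (Fin n) (Fin d) ℝ := Z * CWᵀ - Zstar * (Pt * CWᵀ) with hR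
  have hE : A - Z * CWᵀ = Zstar * X - R := by
    rw [hA, hX, hR, Matrix.mul_sub]
    abel
  have hZtR : Zstarᵀ * R = 0 := by
    rw [hR, Matrix.mul_sub, hPt]
    have : Zstarᵀ * (Zstar * (S⁻¹ * (Zstarᵀ * Z) * CWᵀ))
        = (S * S⁻¹) * ((Zstarᵀ * Z) * CWᵀ) := by
      rw [hS]; noncomm_ring [Matrix.mul_assoc]
    rw [this, hSinv, Matrix.one_mul, Matrix.mul_assoc]
    simp
  have horth : ∑ i, ∑ j, (Zstar * X) i j * R i j = 0 := by
    rw [sum_mul_eq_trace, Matrix.transpose_mul, Matrix.mul_assoc, hZtR]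
    simp
  have hsplit : frob2 (A - Z * CWᵀ) = frob2 (Zstar * X) + frob2 R := by
    rw [hE]; exact frob2_sub_of_orth _ _ horth
  have h1 : σ ^ 2 * frob2 X ≤ frob2 (Zstar * X) := frob2_mul_ge _ _
  have hXfrob : frob2 X = frob2 (CW * Ptᵀ - Cstar) := by
    have : CW * Ptᵀ - Cstar = -Xᵀ := by
      rw [hX]; simp [Matrix.transpose_sub, Matrix.transpose_mul]
    rw [this]
    unfold frob2
    simp only [Matrix.neg_apply, Matrix.transpose_apply, neg_sq]
    rw [Finset.sum_comm]
  have hδ2 : δ ^ 2 ≤ frob2 X := by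
    rw [hXfrob]
    have h := hmis Ptᵀ
    rw [frob_eq] at h
    exact (Real.le_sqrt hδ.le (frob2_nonneg _)).mp h
  have hfinal : (σ * δ) ^ 2 ≤ frob2 (A - Z * CWᵀ) := by
    have : σ ^ 2 * δ ^ 2 ≤ σ ^ 2 * frob2 X :=
      mul_le_mul_of_nonneg_left hδ2 (by positivity)
    calc (σ * δ) ^ 2 = σ ^ 2 * δ ^ 2 := by ring
      _ ≤ σ ^ 2 * frob2 X := this
      _ ≤ frob2 (Zstar * X) := h1
      _ ≤ frob2 (Zstar * X) + frob2 R := le_add_of_nonneg_right (frob2_nonneg R)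
      _ = frob2 (A - Z * CWᵀ) := hsplit.symm
  rw [frob_eq]
  have := Real.sqrt_le_sqrt hfinal
  rwa [Real.sqrt_sq (by positivity)] at this
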